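/- Let $M \subseteq \mathbb{Z}^n$ be a positive normal affine monoid with $\mathrm{gp}(M) = \mathbb{Z}^n$, with support forms $\sigma_1, \dots, \sigma_s$ of $\mathrm{cone}(M)$. Then $K[M]$ is Gorenstein if and only if there exists a (necessarily unique) $y \in \mathrm{relint}(M)$ with $\sigma_i(y) = 1$ for all $i = 1, \dots, s$. -/

import Mathlib

open scoped BigOperators

noncomputable section

/-- The canonical map `ℤⁿ → ℝⁿ`. -/
def toR {n : ℕ} (z : Fin n → ℤ) : Fin n → ℝ := fun i => (z i : ℝ)

/-- The real extension of an integral linear form. -/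
def realForm {n : ℕ} (ℓ : (Fin n → ℤ) →ₗ[ℤ] ℤ) (x : Fin n → ℝ) : ℝ :=
  ∑ k, (ℓ (Pi.single k 1) : ℝ) * x k

/-- The cone in `ℝⁿ` generated by a set of lattice points. -/
def coneOf {n : ℕ} (M : Set (Fin n → ℤ)) : Set (Fin n → ℝ) :=
  {x | ∃ (t : Finset (Fin n → ℤ)) (c : (Fin n → ℤ) → ℝ),
    (↑t : Set (Fin n → ℤ)) ⊆ M ∧ (∀ a, 0 ≤ c a) ∧ x = ∑ a ∈ t, c a • toR a}

/-- `relint M` with respect to the support forms `σ`. -/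
def relintM {n s : ℕ} (M : AddSubmonoid (Fin n → ℤ))
    (σ : Fin s → ((Fin n → ℤ) →ₗ[ℤ] ℤ)) : Set (Fin n → ℤ) :=
  {a | a ∈ M ∧ ∀ i, 0 < σ i a}

lemma gor_linform_eq {n : ℕ} (ℓ : (Fin n → ℤ) →ₗ[ℤ] ℤ) (a : Fin n → ℤ) :
    ℓ a = ∑ k, ℓ (Pi.single k 1) * a k := by
  have hsingle : ∀ k : Fin n, (fun j => if k = j then (1:ℤ) else 0) = Pi.single k 1 := by
    intro k; funext j; simp [Pi.single_apply, eq_comm]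
  conv_lhs => rw [pi_eq_sum_univ a]
  rw [map_sum]
  refine Finset.sum_congr rfl fun k _ => ?_
  rw [hsingle k, map_smul, smul_eq_mul, mul_comm]

lemma gor_realForm_toR {n : ℕ} (ℓ : (Fin n → ℤ) →ₗ[ℤ] ℤ) (a : Fin n → ℤ) :
    realForm ℓ (toR a) = (ℓ a : ℝ) := by
  rw [realForm, gor_linform_eq ℓ a]
  push_cast
  exact Finset.sum_congr rfl fun k _ => rfl

lemma gor_realForm_add {n : ℕ} (ℓ : (Fin n → ℤ) →ₗ[ℤ] ℤ) (x y : Fin n → ℝ) :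
    realForm ℓ (x + y) = realForm ℓ x + realForm ℓ y := by
  simp [realForm, mul_add, Finset.sum_add_distrib]

lemma gor_realForm_smul {n : ℕ} (ℓ : (Fin n → ℤ) →ₗ[ℤ] ℤ) (r : ℝ) (x : Fin n → ℝ) :
    realForm ℓ (r • x) = r * realForm ℓ x := by
  rw [realForm, realForm, Finset.mul_sum]
  exact Finset.sum_congr rfl fun k _ => by simp; ring

lemma gor_span_descent {n : ℕ} (t : Finset (Fin n → ℤ)) (z : Fin n → ℤ)
    (h : toR z ∈ Submodule.span ℝ (Set.range fun a : {x // x ∈ t} => toR a.1)) :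
    ∃ q : {x // x ∈ t} → ℚ, toR z = ∑ a : {x // x ∈ t}, (q a : ℝ) • toR a.1 := by
  classical
  set toQ : (Fin n → ℤ) → (Fin n → ℚ) := fun v i => (v i : ℚ) with htoQ
  set cq : (Fin n → ℚ) → (Fin n → ℝ) := fun v i => (v i : ℝ) with hcq
  have hcqinj : Function.Injective cq := by
    intro a b hab; funext i
    have := congrFun hab i
    simp only [hcq] at this
    exact_mod_cast this
  have hcq_toQ : ∀ v : Fin n → ℤ, cq (toQ v) = toR v := by
    intro v; funext i; simp [toR, cq, toQ]
  set W : Submodule ℚ (Fin n → ℚ) :=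
    Submodule.span ℚ (Set.range fun a : {x // x ∈ t} => toQ a.1) with hW
  obtain ⟨W', hWc⟩ := Submodule.exists_isCompl W
  set f : (Fin n → ℚ) →ₗ[ℚ] (Fin n → ℚ) :=
    W.subtype.comp (W.linearProjOfIsCompl W' hWc) with hf
  have hfW : ∀ w ∈ W, f w = w := by
    intro w hw
    simp only [hf, LinearMap.comp_apply]
    rw [show w = ((⟨w, hw⟩ : W) : (Fin n → ℚ)) from rfl,
      ]
    exact congrArg W.subtype (Submodule.projectionOnto_apply_left hWc ⟨w, hw⟩)
  have hfrange : ∀ v, f v ∈ W := by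
    intro v; simp only [hf, LinearMap.comp_apply]; exact SetLike.coe_mem _
  set B := LinearMap.toMatrix' f with hB
  set F : (Fin n → ℝ) →ₗ[ℝ] (Fin n → ℝ) :=
    Matrix.toLin' (B.map (fun q : ℚ => (q : ℝ))) with hF
  have hFcast : ∀ v : Fin n → ℚ, F (cq v) = cq (f v) := by
    intro v
    have hfv : f v = B.mulVec v := by
      conv_lhs => rw [← Matrix.toLin'_toMatrix' f]
      rw [Matrix.toLin'_apply, ← hB]
    funext i
    rw [hF, Matrix.toLin'_apply]
    simp only [Matrix.mulVec, dotProduct, Matrix.map_apply, hcq, hfv]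
    push_cast
    rfl
  have hfixgen : ∀ a : {x // x ∈ t}, F (toR a.1) = toR a.1 := by
    intro a
    rw [← hcq_toQ a.1, hFcast (toQ a.1), hfW (toQ a.1)]
    exact Submodule.subset_span ⟨a, rfl⟩
  have hFz : F (toR z) = toR z := by
    have := LinearMap.eqOn_span' (f := F) (g := (LinearMap.id : (Fin n → ℝ) →ₗ[ℝ] _))
      (s := Set.range fun a : {x // x ∈ t} => toR a.1) (by
        rintro x ⟨a, rfl⟩; exact hfixgen a)
    exact this h
  have hzW : toQ z ∈ W := by
    have h1 : cq (f (toQ z)) = cq (toQ z) := by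
      rw [← hFcast, hcq_toQ, hFz]
    have h2 : f (toQ z) = toQ z := hcqinj h1
    rw [← h2]; exact hfrange _
  rw [hW, Submodule.mem_span_range_iff_exists_fun] at hzW
  obtain ⟨q, hq⟩ := hzW
  refine ⟨q, ?_⟩
  funext i
  have h2 : (∑ a : {x // x ∈ t}, q a • toQ a.1) i = toQ z i := by rw [hq]
  simp only [Finset.sum_apply, Pi.smul_apply, smul_eq_mul, htoQ] at h2
  have h3 := congrArg (fun r : ℚ => (r : ℝ)) h2
  push_cast at h3
  simpa [toR, Finset.sum_apply] using h3.symm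

lemma gor_rat_coeffs {n : ℕ} (z : Fin n → ℤ) :
    ∀ (t : Finset (Fin n → ℤ)) (c : (Fin n → ℤ) → ℝ),
      (∀ a ∈ t, 0 ≤ c a) → toR z = ∑ a ∈ t, c a • toR a →
      ∃ q : (Fin n → ℤ) → ℚ, (∀ a ∈ t, 0 ≤ q a) ∧
        toR z = ∑ a ∈ t, (q a : ℝ) • toR a := by
  classical
  intro t
  induction t using Finset.strongInduction with
  | _ t ih =>
    intro c hc hx
    by_cases hind : LinearIndependent ℝ (fun a : {x // x ∈ t} => toR a.1)
    · -- independent case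
      have hmem : toR z ∈ Submodule.span ℝ (Set.range fun a : {x // x ∈ t} => toR a.1) := by
        rw [hx, ← Finset.sum_coe_sort t (fun a => c a • toR a)]
        exact Submodule.sum_mem _ fun a _ =>
          Submodule.smul_mem _ _ (Submodule.subset_span ⟨a, rfl⟩)
      obtain ⟨q, hq⟩ := gor_span_descent t z hmem
      have huniq : ∀ a : {x // x ∈ t}, c a.1 = (q a : ℝ) := by
        have h0 : ∑ a : {x // x ∈ t}, (c a.1 - (q a : ℝ)) • toR a.1 = 0 := by
          simp only [sub_smul, Finset.sum_sub_distrib]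
          rw [Finset.sum_coe_sort t (fun a => c a • toR a), ← hx, hq]
          exact sub_self _
        intro a
        have := (Fintype.linearIndependent_iff.mp hind) _ h0 a
        linarith [sub_eq_zero.mp this]
      refine ⟨fun a => if h : a ∈ t then q ⟨a, h⟩ else 0, ?_, ?_⟩
      · intro a ha
        dsimp only
        rw [dif_pos ha]
        have := huniq ⟨a, ha⟩
        have h2 := hc a ha
        rw [this] at h2
        exact_mod_cast h2
      · rw [hx, ← Finset.sum_coe_sort t, ← Finset.sum_coe_sort t]
        refine Finset.sum_congr rfl fun a _ => ?_
        dsimp only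
        rw [dif_pos a.2, Subtype.coe_eta, huniq a]
    · -- dependent case: reduce support
      obtain ⟨g, hgsum, a₀, hg0⟩ := Fintype.not_linearIndependent_iff.mp hind
      -- extend g to a function d on all of ℤⁿ, possibly flipping sign
      have key : ∀ d : (Fin n → ℤ) → ℝ, (∑ a ∈ t, d a • toR a = 0) →
          (∃ a ∈ t, 0 < d a) →
          ∃ q : (Fin n → ℤ) → ℚ, (∀ a ∈ t, 0 ≤ q a) ∧
            toR z = ∑ a ∈ t, (q a : ℝ) • toR a := by
        intro d hdsum ⟨ap, hapt, hap⟩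
        set sPos := t.filter (fun a => 0 < d a) with hsPos
        have hsne : sPos.Nonempty := ⟨ap, Finset.mem_filter.mpr ⟨hapt, hap⟩⟩
        obtain ⟨m₀, hm₀s, hm₀min⟩ := Finset.exists_min_image sPos (fun a => c a / d a) hsne
        have hm₀t : m₀ ∈ t := (Finset.mem_filter.mp hm₀s).1
        have hdm₀ : 0 < d m₀ := (Finset.mem_filter.mp hm₀s).2
        set τ := c m₀ / d m₀ with hτ
        have hτ0 : 0 ≤ τ := div_nonneg (hc m₀ hm₀t) hdm₀.le
        set c' : (Fin n → ℤ) → ℝ := fun a => c a - τ * d a with hc'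
        have hc'nonneg : ∀ a ∈ t, 0 ≤ c' a := by
          intro a ha
          simp only [hc']
          rcases le_or_gt (d a) 0 with hd | hd
          · nlinarith [hc a ha]
          · have has : a ∈ sPos := Finset.mem_filter.mpr ⟨ha, hd⟩
            have := hm₀min a has
            rw [div_le_div_iff₀ hdm₀ hd] at this
            have h2 : τ * d a ≤ c a := by
              rw [hτ, div_mul_eq_mul_div, div_le_iff₀ hdm₀]
              linarith [this]
            linarith
        have hc'm₀ : c' m₀ = 0 := by
          simp only [hc', hτ]
          field_simp
          ring
        have hx' : toR z = ∑ a ∈ t.erase m₀, c' a • toR a := by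
          have h1 : ∑ a ∈ t, c' a • toR a = ∑ a ∈ t, c a • toR a - τ • ∑ a ∈ t, d a • toR a := by
            rw [Finset.smul_sum, ← Finset.sum_sub_distrib]
            refine Finset.sum_congr rfl fun a _ => ?_
            simp only [hc', sub_smul, smul_smul]
          rw [← Finset.sum_erase_add t _ hm₀t] at h1
          rw [hc'm₀, zero_smul, add_zero] at h1
          rw [h1, hdsum, smul_zero, sub_zero, ← hx]
        obtain ⟨q, hq0, hqx⟩ := ih (t.erase m₀) (Finset.erase_ssubset hm₀t)
          c' (fun a ha => hc'nonneg a (Finset.mem_of_mem_erase ha)) hx'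
        refine ⟨Function.update q m₀ 0, ?_, ?_⟩
        · intro a ha
          rcases eq_or_ne a m₀ with rfl | hne
          · rw [Function.update_self]
          · rw [Function.update_of_ne hne]
            exact hq0 a (Finset.mem_erase.mpr ⟨hne, ha⟩)
        · rw [← Finset.sum_erase_add t _ hm₀t, Function.update_self]
          push_cast
          rw [zero_smul, add_zero, hqx]
          refine Finset.sum_congr rfl fun a ha => ?_
          rw [Function.update_of_ne (Finset.mem_erase.mp ha).1]
      rcases lt_trichotomy (g a₀) 0 with hlt | heq | hgt
      · -- use -g extended
        refine key (fun a => if h : a ∈ t then -g ⟨a, h⟩ else 0) ?_ ⟨a₀.1, a₀.2, ?_⟩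
        · rw [← Finset.sum_coe_sort t]
          rw [← neg_eq_zero, ← Finset.sum_neg_distrib]
          rw [← hgsum]
          refine Finset.sum_congr rfl fun a _ => ?_
          rw [dif_pos a.2, Subtype.coe_eta]
          simp
        · rw [dif_pos a₀.2, Subtype.coe_eta]
          linarith
      · exact absurd heq hg0
      · refine key (fun a => if h : a ∈ t then g ⟨a, h⟩ else 0) ?_ ⟨a₀.1, a₀.2, ?_⟩
        · rw [← Finset.sum_coe_sort t, ← hgsum]
          refine Finset.sum_congr rfl fun a _ => ?_
          rw [dif_pos a.2, Subtype.coe_eta]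
        · rw [dif_pos a₀.2, Subtype.coe_eta]
          exact hgt

-- helper: clearing denominators
lemma gor_denom_clear (q : ℚ) (D : ℕ) (hdvd : q.den ∣ D) (hq : 0 ≤ q) :
    ∃ k : ℕ, ((k : ℚ)) = q * D := by
  obtain ⟨e, he⟩ := hdvd
  refine ⟨q.num.toNat * e, ?_⟩
  have hnum : (0:ℤ) ≤ q.num := Rat.num_nonneg.mpr hq
  have : ((q.num.toNat : ℤ)) = q.num := Int.toNat_of_nonneg hnum
  push_cast [this]
  rw [he]
  push_cast
  rw [← mul_assoc, Rat.mul_den_eq_num]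
  congr 1
  exact_mod_cast this

lemma gor_memM_iff {n s : ℕ} (M : AddSubmonoid (Fin n → ℤ))
    (hnorm : ∀ (x : Fin n → ℤ) (k : ℕ), 0 < k → (k : ℤ) • x ∈ M → x ∈ M)
    (σ : Fin s → ((Fin n → ℤ) →ₗ[ℤ] ℤ))
    (hcone : coneOf (M : Set (Fin n → ℤ)) = {x | ∀ i, 0 ≤ realForm (σ i) x})
    (a : Fin n → ℤ) : a ∈ M ↔ ∀ i, 0 ≤ σ i a := by
  classical
  constructor
  · intro ha i
    have hmem : toR a ∈ coneOf (M : Set (Fin n → ℤ)) := by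
      refine ⟨{a}, fun b => if b = a then 1 else 0, ?_, ?_, ?_⟩
      · intro b hb
        simp only [Finset.coe_singleton, Set.mem_singleton_iff] at hb
        subst hb; exact ha
      · intro b; dsimp only; split <;> norm_num
      · simp
    rw [hcone] at hmem
    have := hmem i
    rw [gor_realForm_toR] at this
    exact_mod_cast this
  · intro h
    have hmem : toR a ∈ coneOf (M : Set (Fin n → ℤ)) := by
      rw [hcone]
      intro i
      rw [gor_realForm_toR]
      exact_mod_cast h i
    obtain ⟨t, c, htM, hc, hx⟩ := hmem
    obtain ⟨q, hq0, hqx⟩ := gor_rat_coeffs a t c (fun b _ => hc b) hx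
    set D : ℕ := ∏ m ∈ t, (q m).den with hD
    have hDpos : 0 < D := Finset.prod_pos (fun m _ => (q m).pos)
    have hint : ∀ m : (Fin n → ℤ), ∃ k : ℕ, m ∈ t → ((k : ℚ)) = q m * D := by
      intro m
      by_cases hm : m ∈ t
      · obtain ⟨k, hk⟩ := gor_denom_clear (q m) D
          (Finset.dvd_prod_of_mem _ hm) (hq0 m hm)
        exact ⟨k, fun _ => hk⟩
      · exact ⟨0, fun h => absurd h hm⟩
    choose k hk using hint
    have hsum : (D : ℤ) • a = ∑ m ∈ t, k m • m := by
      funext i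
      have h1 := congrFun hqx i
      simp only [toR, Finset.sum_apply, Pi.smul_apply, smul_eq_mul] at h1
      have hreal : ((D:ℝ)) * (a i : ℝ) = ∑ m ∈ t, (k m : ℝ) * (m i : ℝ) := by
        rw [h1, Finset.mul_sum]
        refine Finset.sum_congr rfl fun m hm => ?_
        have h2 := congrArg (fun r : ℚ => (r : ℝ)) (hk m hm)
        push_cast at h2
        rw [h2]; ring
      simp only [Pi.smul_apply, Finset.sum_apply, smul_eq_mul, nsmul_eq_mul]
      exact_mod_cast hreal
    have hMsum : ∑ m ∈ t, k m • m ∈ M :=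
      AddSubmonoid.sum_mem _ (fun m hm => AddSubmonoid.nsmul_mem _ (htM hm) (k m))
    exact hnorm a D hDpos (hsum ▸ hMsum)

lemma gor_exists_one {n : ℕ} (ℓ : (Fin n → ℤ) →ₗ[ℤ] ℤ)
    (hprim : Finset.univ.gcd (fun k => ℓ (Pi.single k 1)) = 1) :
    ∃ x : Fin n → ℤ, ℓ x = 1 := by
  classical
  set I : Ideal ℤ := Ideal.span (Set.range fun k : Fin n => ℓ (Pi.single k 1)) with hI
  have hprin : Submodule.IsPrincipal I := IsPrincipalIdealRing.principal I
  obtain ⟨g, hg⟩ := hprin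
  have hgdvd : ∀ k : Fin n, g ∣ ℓ (Pi.single k 1) := by
    intro k
    have hmem : ℓ (Pi.single k 1) ∈ I := Ideal.subset_span ⟨k, rfl⟩
    rw [hg] at hmem
    exact (Ideal.mem_span_singleton.mp hmem)
  have hg1 : g ∣ 1 := by
    rw [← hprim]
    exact Finset.dvd_gcd fun k _ => hgdvd k
  have htop : I = ⊤ := by
    rw [hg]
    exact Ideal.span_singleton_eq_top.mpr (isUnit_of_dvd_one hg1)
  have h1 : (1:ℤ) ∈ I := htop ▸ Submodule.mem_top
  rw [hI] at h1
  rw [Ideal.span, Submodule.mem_span_range_iff_exists_fun] at h1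
  obtain ⟨c, hc⟩ := h1
  refine ⟨∑ k, c k • Pi.single k 1, ?_⟩
  rw [map_sum]
  exact (Finset.sum_congr rfl fun k _ => map_smul ℓ (c k) (Pi.single k 1)).trans hc

lemma gor_denom_clear' (q : ℚ) (D : ℕ) (hdvd : q.den ∣ D) :
    ∃ k : ℤ, ((k : ℚ)) = q * D := by
  obtain ⟨e, he⟩ := hdvd
  refine ⟨q.num * e, ?_⟩
  push_cast
  rw [he]
  push_cast
  rw [← mul_assoc, Rat.mul_den_eq_num]

lemma gor_facet_point {n s : ℕ} (σ : Fin s → ((Fin n → ℤ) →ₗ[ℤ] ℤ)) (i : Fin s)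
    (x : Fin n → ℝ) (hx : ∀ j, j ≠ i → 0 ≤ realForm (σ j) x) (hxi : realForm (σ i) x < 0)
    (w : Fin n → ℤ) (hw : ∀ j, 1 ≤ σ j w)
    (x₀ : Fin n → ℤ) (hx₀ : σ i x₀ = 1) :
    ∃ u : Fin n → ℤ, σ i u = 0 ∧ ∀ j, j ≠ i → 1 ≤ σ j u := by
  classical
  set α : ℝ := -realForm (σ i) x with hα
  have hα0 : 0 < α := by simp [hα]; linarith
  set p : Fin n → ℝ := α • toR w + ((σ i w : ℝ)) • x with hp
  have hσiw : (1:ℝ) ≤ (σ i w : ℝ) := by exact_mod_cast hw i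
  have hpi : realForm (σ i) p = 0 := by
    rw [hp, gor_realForm_add, gor_realForm_smul, gor_realForm_smul, gor_realForm_toR, hα]
    ring
  have hpj : ∀ j, j ≠ i → α ≤ realForm (σ j) p := by
    intro j hj
    rw [hp, gor_realForm_add, gor_realForm_smul, gor_realForm_smul, gor_realForm_toR]
    have h1 : (1:ℝ) ≤ (σ j w : ℝ) := by exact_mod_cast hw j
    have h2 : 0 ≤ realForm (σ j) x := hx j hj
    nlinarith
  set C : Fin s → ℝ := fun j => ∑ k, |(σ j (Pi.single k 1) : ℝ)| with hC
  have hC0 : ∀ j, 0 ≤ C j := fun j => Finset.sum_nonneg fun k _ => abs_nonneg _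
  set S : ℝ := 1 + ∑ j, (C j + C i * |(σ j x₀ : ℝ)|) with hS
  have hS1 : 1 ≤ S := by
    rw [hS]
    have : 0 ≤ ∑ j, (C j + C i * |(σ j x₀ : ℝ)|) :=
      Finset.sum_nonneg fun j _ => add_nonneg (hC0 j) (mul_nonneg (hC0 i) (abs_nonneg _))
    linarith
  have hS0 : 0 < S := by linarith
  set ε : ℝ := α / S with hε
  have hε0 : 0 < ε := div_pos hα0 hS0
  -- rational approximation of p
  have happrox : ∀ k : Fin n, ∃ qk : ℚ, p k < qk ∧ (qk : ℝ) < p k + ε := by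
    intro k; exact exists_rat_btwn (by linarith)
  choose v hv1 hv2 using happrox
  set d : ℕ := ∏ k, (v k).den with hd
  have hd1 : 1 ≤ d := Nat.one_le_iff_ne_zero.mpr (Finset.prod_ne_zero_iff.mpr
    fun k _ => (v k).den_nz)
  have hdR : (1:ℝ) ≤ (d:ℝ) := by exact_mod_cast hd1
  have hv' : ∀ k : Fin n, ∃ zk : ℤ, (zk : ℚ) = v k * d := by
    intro k
    exact gor_denom_clear' (v k) d (Finset.dvd_prod_of_mem _ (Finset.mem_univ k))
  choose v' hv'eq using hv'
  set cqv : Fin n → ℝ := fun k => (v k : ℝ) with hcqv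
  have htoRv' : toR v' = (d : ℝ) • cqv := by
    funext k
    have := congrArg (fun r : ℚ => (r : ℝ)) (hv'eq k)
    push_cast at this
    simpa [toR, hcqv, mul_comm] using this
  -- σ j v' as real
  have hform : ∀ j, (σ j v' : ℝ) = (d:ℝ) * realForm (σ j) cqv := by
    intro j
    rw [← gor_realForm_toR, htoRv', gor_realForm_smul]
  -- estimates
  have hest : ∀ j, |realForm (σ j) cqv - realForm (σ j) p| ≤ C j * ε := by
    intro j
    have h1 : realForm (σ j) cqv - realForm (σ j) p
        = ∑ k, (σ j (Pi.single k 1) : ℝ) * (cqv k - p k) := by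
      rw [realForm, realForm, ← Finset.sum_sub_distrib]
      exact Finset.sum_congr rfl fun k _ => by ring
    rw [h1, hC, Finset.sum_mul]
    refine (Finset.abs_sum_le_sum_abs _ _).trans (Finset.sum_le_sum fun k _ => ?_)
    rw [abs_mul]
    refine mul_le_mul_of_nonneg_left ?_ (abs_nonneg _)
    have hl := hv1 k
    have hr := hv2 k
    rw [abs_le]
    constructor <;> [linarith [hv1 k]; linarith [hv2 k]]
  -- the candidate
  refine ⟨v' - (σ i v') • x₀, ?_, ?_⟩
  · rw [map_sub, map_smul, smul_eq_mul, hx₀, mul_one, sub_self]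
  · intro j hj
    have hgoal : (0:ℝ) < ((σ j (v' - (σ i v') • x₀) : ℤ) : ℝ) := by
      have heq : ((σ j (v' - (σ i v') • x₀) : ℤ) : ℝ)
          = (d:ℝ) * realForm (σ j) cqv - ((d:ℝ) * realForm (σ i) cqv) * (σ j x₀ : ℝ) := by
        rw [map_sub, map_smul, smul_eq_mul]
        push_cast
        rw [hform j, hform i]
      rw [heq]
      -- bounds
      have hAbound : |realForm (σ i) cqv| ≤ C i * ε := by
        have := hest i
        rwa [hpi, sub_zero] at this
      have hBbound : α - C j * ε ≤ realForm (σ j) cqv := by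
        have h2 := hest j
        have h3 := hpj j hj
        have := abs_le.mp h2
        linarith [this.1]
      have hkey : C j + C i * |(σ j x₀ : ℝ)| ≤ S - 1 := by
        rw [hS]
        have := Finset.single_le_sum
          (f := fun j' => C j' + C i * |(σ j' x₀ : ℝ)|)
          (fun j' _ => add_nonneg (hC0 j') (mul_nonneg (hC0 i) (abs_nonneg _)))
          (Finset.mem_univ j)
        linarith
      have hεS : ε * (S - 1) < α := by
        rw [hε]
        have : α / S * (S - 1) = α - α / S := by field_simp
        rw [this]
        have : 0 < α / S := div_pos hα0 hS0
        linarith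
      -- combine
      have habs : realForm (σ i) cqv * (σ j x₀ : ℝ) ≤ C i * ε * |(σ j x₀ : ℝ)| := by
        calc realForm (σ i) cqv * (σ j x₀ : ℝ) ≤ |realForm (σ i) cqv * (σ j x₀ : ℝ)| := le_abs_self _
        _ = |realForm (σ i) cqv| * |(σ j x₀ : ℝ)| := abs_mul _ _
        _ ≤ C i * ε * |(σ j x₀ : ℝ)| := mul_le_mul_of_nonneg_right hAbound (abs_nonneg _)
      have hfinal : α - ε * (S - 1) ≤ realForm (σ j) cqv - realForm (σ i) cqv * (σ j x₀ : ℝ) := by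
        have : C j * ε + C i * ε * |(σ j x₀ : ℝ)| ≤ ε * (S - 1) := by
          have := hkey
          nlinarith [hε0.le]
        linarith
      have hpos : 0 < realForm (σ j) cqv - realForm (σ i) cqv * (σ j x₀ : ℝ) := by
        linarith
      calc (0:ℝ) < (d:ℝ) * (realForm (σ j) cqv - realForm (σ i) cqv * (σ j x₀ : ℝ)) := by
            apply mul_pos (by linarith) hpos
      _ = (d:ℝ) * realForm (σ j) cqv - ((d:ℝ) * realForm (σ i) cqv) * (σ j x₀ : ℝ) := by ring
    have : (0:ℤ) < σ j (v' - (σ i v') • x₀) := by exact_mod_cast hgoal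
    linarith

/-- For a positive normal affine monoid `M ⊆ ℤⁿ` with `gp M = ℤⁿ` and
support forms `σ₁, …, σ_s`, the algebra `K[M]` is Gorenstein (i.e. `relint M = y + M`
for some `y`, by the Stanley–Danilov criterion) if and only if there exists a
(necessarily unique) `y ∈ relint M` with `σᵢ y = 1` for all `i`. -/
theorem gorenstein_iff_interior_point_with_forms_one
    (n s : ℕ) (M : AddSubmonoid (Fin n → ℤ)) (hfg : M.FG)
    (hpos : ∀ a ∈ M, -a ∈ M → a = 0)
    (hnorm : ∀ (x : Fin n → ℤ) (k : ℕ), 0 < k → (k : ℤ) • x ∈ M → x ∈ M)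
    (hgp : AddSubgroup.closure (M : Set (Fin n → ℤ)) = ⊤)
    (σ : Fin s → ((Fin n → ℤ) →ₗ[ℤ] ℤ))
    (hcone : coneOf (M : Set (Fin n → ℤ)) = {x | ∀ i, 0 ≤ realForm (σ i) x})
    (hirr : ∀ i, ∃ x : Fin n → ℝ,
      (∀ j, j ≠ i → 0 ≤ realForm (σ j) x) ∧ realForm (σ i) x < 0)
    (hprim : ∀ i, Finset.univ.gcd (fun k => σ i (Pi.single k 1)) = 1) :
    (∃ y ∈ relintM M σ, relintM M σ = (fun a => y + a) '' (M : Set (Fin n → ℤ)))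
      ↔ (∃! y : Fin n → ℤ, y ∈ relintM M σ ∧ ∀ i, σ i y = 1) := by
  have hMiff := gor_memM_iff M hnorm σ hcone
  constructor
  · rintro ⟨y, hy, heq⟩
    -- first show σ i y = 1 for all i
    have hone : ∀ i, σ i y = 1 := by
      intro i
      have hy1 : 1 ≤ σ i y := hy.2 i
      -- construct z ∈ relint with σ i z = 1
      obtain ⟨x, hx, hxi⟩ := hirr i
      obtain ⟨x₀, hx₀⟩ := gor_exists_one (σ i) (hprim i)
      obtain ⟨u, hu0, hu1⟩ := gor_facet_point σ i x hx hxi y (fun j => hy.2 j) x₀ hx₀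
      set N : ℤ := 1 + ∑ j, |σ j x₀| with hN
      have hN1 : 1 ≤ N := by
        rw [hN]
        have : 0 ≤ ∑ j, |σ j x₀| := Finset.sum_nonneg fun j _ => abs_nonneg _
        linarith
      set z : Fin n → ℤ := x₀ + N • u with hz
      have hzi : σ i z = 1 := by
        rw [hz, map_add, map_smul, hu0, smul_eq_mul, mul_zero, add_zero, hx₀]
      have hzj : ∀ j, 1 ≤ σ j z := by
        intro j
        rcases eq_or_ne j i with rfl | hj
        · rw [hzi]
        · rw [hz, map_add, map_smul, smul_eq_mul]
          have h1 : 1 ≤ σ j u := hu1 j hj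
          have h2 : N ≤ N * σ j u := le_mul_of_one_le_right (by linarith) h1
          have h3 : |σ j x₀| ≤ ∑ j', |σ j' x₀| :=
            Finset.single_le_sum (f := fun j' => |σ j' x₀|)
              (fun j' _ => abs_nonneg _) (Finset.mem_univ j)
          have h4 : -(σ j x₀) ≤ |σ j x₀| := neg_le_abs _
          have h5 : 1 + |σ j x₀| ≤ N := by rw [hN]; linarith
          linarith
      have hzrel : z ∈ relintM M σ := by
        refine ⟨(hMiff z).mpr fun j => by linarith [hzj j], fun j => by linarith [hzj j]⟩
      rw [heq] at hzrel
      obtain ⟨m, hm, hzm⟩ := hzrel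
      have hmi : 0 ≤ σ i m := (hMiff m).mp hm i
      have : σ i z = σ i y + σ i m := by rw [← hzm, map_add]
      rw [hzi] at this
      omega
    refine ⟨y, ⟨hy, hone⟩, ?_⟩
    rintro y' ⟨hy', hone'⟩
    rw [heq] at hy'
    obtain ⟨m, hm, hym⟩ := hy'
    have hmzero : ∀ i, σ i m = 0 := by
      intro i
      have : σ i y' = σ i y + σ i m := by rw [← hym, map_add]
      rw [hone' i, hone i] at this
      omega
    have hnegm : -m ∈ M := (hMiff (-m)).mpr fun i => by rw [map_neg, hmzero i]; simp
    have : m = 0 := hpos m hm hnegm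
    rw [← hym, this]; simp
  · rintro ⟨y, ⟨⟨hyM, hypos⟩, hyone⟩, _⟩
    refine ⟨y, ⟨hyM, hypos⟩, ?_⟩
    ext z
    constructor
    · rintro ⟨hzM, hzpos⟩
      refine ⟨z - y, ?_, by simp⟩
      have : ∀ i, 0 ≤ σ i (z - y) := by
        intro i
        rw [map_sub, hyone i]
        have := hzpos i
        omega
      exact (hMiff (z - y)).mpr this
    · rintro ⟨m, hm, rfl⟩
      refine ⟨M.add_mem hyM hm, fun i => ?_⟩
      rw [map_add, hyone i]
      have := (hMiff m).mp hm i
      omega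

end
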